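/- Suppose for k = 0,…,t the inequality ρ·[f(x) − f(x̄^k)] + ⟨w − w̄^k, (1/η_k)·Γ(w)⟩ + (1/2)‖w − w^k‖²_{H_k} ≥ (1/2)‖w − w^{k+1}‖²_{H_k} holds for all w ∈ Ω, where f is convex, H_k are symmetric positive semidefinite with H_{k+1} ⪯ H_k, and η_k > 0. Define x̄_t = (1/(t+1))∑_{k=0}^t x̄^k, 1/η_t = (1/(t+1))∑_{k=0}^t 1/η_k, and w̄_t = (∑_k w̄^k/η_k)/(∑_k 1/η_k). Then for any w ∈ Ω: ρ·[f(x̄_t) − f(x)] + ⟨w̄_t − w, (1/η_t)Γ(w)⟩ ≤ (1/(2(t+1)))·‖w − w^0‖²_{H_0}. -/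

import Mathlib

open Matrix

private lemma sum_dotProduct' {ι α : Type*} [Fintype α] (s : Finset ι)
    (v : ι → α → ℝ) (g : α → ℝ) : (∑ k ∈ s, v k) ⬝ᵥ g = ∑ k ∈ s, v k ⬝ᵥ g := by
  simp only [dotProduct, Finset.sum_apply, Finset.sum_mul]
  exact Finset.sum_comm

theorem stmt14 (n m t : ℕ) (Ω : Set (Fin n ⊕ Fin m → ℝ))
    (hΩconv : Convex ℝ Ω) (hΩcl : IsClosed Ω)
    (f : (Fin n → ℝ) → ℝ) (hf : ConvexOn ℝ Set.univ f)
    (Γ : (Fin n ⊕ Fin m → ℝ) → (Fin n ⊕ Fin m → ℝ))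
    (H : ℕ → Matrix (Fin n ⊕ Fin m) (Fin n ⊕ Fin m) ℝ)
    (hHpsd : ∀ k, (H k).PosSemidef)
    (hHmono : ∀ k, (H k - H (k+1)).PosSemidef)
    (ρ : ℝ) (hρ : 0 < ρ) (η : ℕ → ℝ) (hη : ∀ k, 0 < η k)
    (w wb : ℕ → Fin n ⊕ Fin m → ℝ) (hwb : ∀ k, wb k ∈ Ω)
    (hstep : ∀ k ≤ t, ∀ w' ∈ Ω,
      (1/2) * ((w' - w (k+1)) ⬝ᵥ (H k) *ᵥ (w' - w (k+1))) ≤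
        ρ * (f (fun i => w' (Sum.inl i)) - f (fun i => wb k (Sum.inl i)))
          + (w' - wb k) ⬝ᵥ ((η k)⁻¹ • Γ w')
          + (1/2) * ((w' - w k) ⬝ᵥ (H k) *ᵥ (w' - w k))) :
    ∀ w' ∈ Ω,
      ρ * (f (((t : ℝ) + 1)⁻¹ • ∑ k ∈ Finset.range (t+1), fun i => wb k (Sum.inl i))
            - f (fun i => w' (Sum.inl i)))
        + (((∑ k ∈ Finset.range (t+1), (η k)⁻¹)⁻¹ •
              ∑ k ∈ Finset.range (t+1), (η k)⁻¹ • wb k) - w') ⬝ᵥ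
            (((∑ k ∈ Finset.range (t+1), (η k)⁻¹) / ((t : ℝ) + 1)) • Γ w')
      ≤ (1 / (2 * ((t : ℝ) + 1))) * ((w' - w 0) ⬝ᵥ (H 0) *ᵥ (w' - w 0)) := by
  intro w' hw'
  have hN0 : (0:ℝ) < (t:ℝ) + 1 := by positivity
  set N : ℝ := (t:ℝ) + 1 with hNdef
  set g : Fin n ⊕ Fin m → ℝ := Γ w' with hg
  set F' : ℝ := f (fun i => w' (Sum.inl i)) with hF'
  set F : ℕ → ℝ := fun k => f (fun i => wb k (Sum.inl i)) with hF
  set S : ℕ → ℝ := fun k => (1/2) * ((w' - w k) ⬝ᵥ (H k) *ᵥ (w' - w k)) with hSdef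
  set A : ℕ → ℝ := fun k =>
    ρ * (F' - F k) + (η k)⁻¹ * ((w' ⬝ᵥ g) - (wb k ⬝ᵥ g)) with hAdef
  -- one-step inequality with monotonicity of H
  have hstep2 : ∀ k ≤ t, S (k+1) ≤ A k + S k := by
    intro k hk
    have h1 := hstep k hk w' hw'
    have h2 : (w' - w (k+1)) ⬝ᵥ (H (k+1)) *ᵥ (w' - w (k+1)) ≤
        (w' - w (k+1)) ⬝ᵥ (H k) *ᵥ (w' - w (k+1)) := by
      have h3 := (hHmono k).dotProduct_mulVec_nonneg (w' - w (k+1))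
      simp only [star_trivial, sub_mulVec, dotProduct_sub] at h3
      linarith
    have h4 : (w' - wb k) ⬝ᵥ ((η k)⁻¹ • g) = (η k)⁻¹ * ((w' ⬝ᵥ g) - (wb k ⬝ᵥ g)) := by
      simp [dotProduct_smul, sub_dotProduct, smul_eq_mul, mul_sub]
    simp only [hSdef, hAdef]
    rw [h4] at h1
    linarith
  -- telescoping
  have key : ∀ j, j ≤ t + 1 → S j ≤ (∑ k ∈ Finset.range j, A k) + S 0 := by
    intro j
    induction j with
    | zero => simp
    | succ j ih =>
      intro hj
      have hj' : j ≤ t := Nat.lt_succ_iff.mp hj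
      have h1 := hstep2 j hj'
      have h2 := ih (le_trans (Nat.le_succ j) hj)
      rw [Finset.sum_range_succ]
      linarith
  have hSnn : 0 ≤ S (t+1) := by
    have h := (hHpsd (t+1)).dotProduct_mulVec_nonneg (w' - w (t+1))
    simp only [star_trivial] at h
    simp only [hSdef]
    linarith
  have hsum : 0 ≤ (∑ k ∈ Finset.range (t+1), A k) + S 0 :=
    le_trans hSnn (key (t+1) le_rfl)
  -- Jensen
  have hjen : f ((N)⁻¹ • ∑ k ∈ Finset.range (t+1), fun i => wb k (Sum.inl i)) ≤
      (N)⁻¹ * ∑ k ∈ Finset.range (t+1), F k := by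
    have h1 : ∑ _k ∈ Finset.range (t+1), (N)⁻¹ = 1 := by
      rw [Finset.sum_const, Finset.card_range, nsmul_eq_mul]
      push_cast
      field_simp
      exact hNdef.symm
    have h2 := hf.map_sum_le (t := Finset.range (t+1))
      (w := fun _ => (N)⁻¹) (p := fun k => fun i => wb k (Sum.inl i))
      (fun i _ => by positivity) h1 (fun i _ => Set.mem_univ _)
    rw [Finset.smul_sum]
    calc f (∑ k ∈ Finset.range (t+1), (N)⁻¹ • fun i => wb k (Sum.inl i))
        ≤ ∑ k ∈ Finset.range (t+1), (N)⁻¹ • F k := h2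
      _ = (N)⁻¹ * ∑ k ∈ Finset.range (t+1), F k := by
          rw [Finset.mul_sum]; simp [smul_eq_mul]
  -- second term rewriting
  have hE : 0 < ∑ k ∈ Finset.range (t+1), (η k)⁻¹ :=
    Finset.sum_pos (fun k _ => inv_pos.mpr (hη k)) ⟨0, Finset.mem_range.mpr (Nat.succ_pos t)⟩
  set E : ℝ := ∑ k ∈ Finset.range (t+1), (η k)⁻¹ with hEdef
  have hterm : ((E⁻¹ • ∑ k ∈ Finset.range (t+1), (η k)⁻¹ • wb k) - w') ⬝ᵥ ((E / N) • g) =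
      N⁻¹ * ((∑ k ∈ Finset.range (t+1), (η k)⁻¹ * (wb k ⬝ᵥ g)) - E * (w' ⬝ᵥ g)) := by
    rw [dotProduct_smul, sub_dotProduct, smul_dotProduct, sum_dotProduct']
    simp only [smul_dotProduct, smul_eq_mul]
    field_simp
  -- combine
  have hAsum : ∑ k ∈ Finset.range (t+1), A k =
      ρ * (N * F' - ∑ k ∈ Finset.range (t+1), F k)
        + (E * (w' ⬝ᵥ g) - ∑ k ∈ Finset.range (t+1), (η k)⁻¹ * (wb k ⬝ᵥ g)) := by
    simp only [hAdef]
    rw [Finset.sum_add_distrib, ← Finset.mul_sum, Finset.sum_sub_distrib,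
      Finset.sum_const, Finset.card_range, nsmul_eq_mul]
    simp only [mul_sub, hEdef, Finset.sum_sub_distrib, ← Finset.mul_sum, ← Finset.sum_mul]
    push_cast
    ring
  rw [hterm]
  have hmain : ρ * ((N)⁻¹ * (∑ k ∈ Finset.range (t+1), F k) - F')
      + N⁻¹ * ((∑ k ∈ Finset.range (t+1), (η k)⁻¹ * (wb k ⬝ᵥ g)) - E * (w' ⬝ᵥ g))
      ≤ N⁻¹ * S 0 := by
    have h3 : ρ * ((N)⁻¹ * (∑ k ∈ Finset.range (t+1), F k) - F')
        + N⁻¹ * ((∑ k ∈ Finset.range (t+1), (η k)⁻¹ * (wb k ⬝ᵥ g)) - E * (w' ⬝ᵥ g))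
        = -(N⁻¹ * (∑ k ∈ Finset.range (t+1), A k)) := by
      rw [hAsum]
      field_simp
      ring
    rw [h3]
    have h4 : - S 0 ≤ ∑ k ∈ Finset.range (t+1), A k := by linarith
    have h5 : N⁻¹ * (- S 0) ≤ N⁻¹ * (∑ k ∈ Finset.range (t+1), A k) :=
      mul_le_mul_of_nonneg_left h4 (by positivity)
    nlinarith [h5]
  have hfinal : ρ * (f ((N)⁻¹ • ∑ k ∈ Finset.range (t+1), fun i => wb k (Sum.inl i)) - F')
      ≤ ρ * ((N)⁻¹ * (∑ k ∈ Finset.range (t+1), F k) - F') := by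
    apply mul_le_mul_of_nonneg_left _ hρ.le
    linarith [hjen]
  have hS0 : N⁻¹ * S 0 = (1 / (2 * N)) * ((w' - w 0) ⬝ᵥ (H 0) *ᵥ (w' - w 0)) := by
    simp only [hSdef]
    rw [show (1:ℝ)/(2*N) = N⁻¹ * (1/2) by rw [one_div, mul_inv]; ring]
    ring
  linarith [hfinal, hmain, hS0.le]
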